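/- Let λ > 0, s̃ ≥ 1 an integer with ρ₋(A, s̄+2s̃) > 0, and M ≥ ρ₋(A, s̄+2s̃). Suppose x ∈ ℝⁿ satisfies ‖x_{S̄ᶜ}‖₀ ≤ s̃ and T = T_{λ,M}(x) satisfies ‖T_{S̄ᶜ}‖₀ ≤ s̃. Then ω_λ(T) ≤ (1 + κ) · ‖g_{λ,M}(x)‖₂, where κ = ρ₊(A, s̄+2s̃)/ρ₋(A, s̄+2s̃). -/

import Mathlib

open scoped BigOperators
open Matrix

noncomputable section

namespace PGH

/-- Euclidean dot product on `Fin n → ℝ`. -/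
def dot {n : ℕ} (x y : Fin n → ℝ) : ℝ := ∑ i, x i * y i

/-- Squared Euclidean norm. -/
def sqnorm {n : ℕ} (x : Fin n → ℝ) : ℝ := ∑ i, (x i) ^ 2

/-- Euclidean (ℓ₂) norm. -/
noncomputable def l2 {n : ℕ} (x : Fin n → ℝ) : ℝ := Real.sqrt (sqnorm x)

/-- ℓ₁ norm. -/
def l1 {n : ℕ} (x : Fin n → ℝ) : ℝ := ∑ i, |x i|

/-- ℓ∞ norm (maximum absolute coordinate). -/
noncomputable def linf {n : ℕ} (x : Fin n → ℝ) : ℝ := ⨆ i, |x i|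

/-- Support of a vector. -/
def supp {n : ℕ} (x : Fin n → ℝ) : Finset (Fin n) := Finset.univ.filter (fun i => x i ≠ 0)

/-- Number of nonzero coordinates. -/
def l0 {n : ℕ} (x : Fin n → ℝ) : ℕ := (supp x).card

/-- Number of nonzero coordinates within the index set `S`
(i.e. `‖x_S‖₀` for the restriction of `x` to `S`). -/
def l0on {n : ℕ} (S : Finset (Fin n)) (x : Fin n → ℝ) : ℕ :=
  (S.filter (fun i => x i ≠ 0)).card

/-- ℓ₁ norm of the restriction of `x` to the index set `S`. -/
def l1on {n : ℕ} (S : Finset (Fin n)) (x : Fin n → ℝ) : ℝ := ∑ i ∈ S, |x i|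

/-- Gradient of `f(x) = (1/2)‖Ax - b‖₂²`, namely `Aᵀ(Ax - b)`. -/
def grad {m n : ℕ} (A : Matrix (Fin m) (Fin n) ℝ) (b : Fin m → ℝ) (x : Fin n → ℝ) :
    Fin n → ℝ :=
  Aᵀ.mulVec (A.mulVec x - b)

/-- Least-squares objective `f(x) = (1/2)‖Ax - b‖₂²`. -/
def fls {m n : ℕ} (A : Matrix (Fin m) (Fin n) ℝ) (b : Fin m → ℝ) (x : Fin n → ℝ) : ℝ :=
  sqnorm (A.mulVec x - b) / 2

/-- ℓ₁-regularized least-squares objective `φ_λ(x) = f(x) + λ‖x‖₁`. -/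
def phi {m n : ℕ} (A : Matrix (Fin m) (Fin n) ℝ) (b : Fin m → ℝ) (lam : ℝ)
    (x : Fin n → ℝ) : ℝ :=
  fls A b x + lam * l1 x

/-- Restricted maximal eigenvalue `ρ₊(A, s)`. -/
noncomputable def rhoPlus {m n : ℕ} (A : Matrix (Fin m) (Fin n) ℝ) (s : ℕ) : ℝ :=
  sSup {r | ∃ x : Fin n → ℝ, x ≠ 0 ∧ l0 x ≤ s ∧ r = sqnorm (A.mulVec x) / sqnorm x}

/-- Restricted minimal eigenvalue `ρ₋(A, s)`. -/
noncomputable def rhoMinus {m n : ℕ} (A : Matrix (Fin m) (Fin n) ℝ) (s : ℕ) : ℝ :=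
  sInf {r | ∃ x : Fin n → ℝ, x ≠ 0 ∧ l0 x ≤ s ∧ r = sqnorm (A.mulVec x) / sqnorm x}

/-- `ξ` is a subgradient of the ℓ₁ norm at `x`. -/
def IsSubgrad {n : ℕ} (x ξ : Fin n → ℝ) : Prop :=
  ∀ i, (x i ≠ 0 → ξ i = Real.sign (x i)) ∧ (x i = 0 → |ξ i| ≤ 1)

/-- Optimality residue `ω_λ(x) = min_{ξ ∈ ∂‖x‖₁} ‖Aᵀ(Ax−b) + λξ‖_∞`. -/
noncomputable def omega {m n : ℕ} (A : Matrix (Fin m) (Fin n) ℝ) (b : Fin m → ℝ)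
    (lam : ℝ) (x : Fin n → ℝ) : ℝ :=
  sInf {r | ∃ ξ : Fin n → ℝ, IsSubgrad x ξ ∧
    r = linf (fun i => grad A b x i + lam * ξ i)}

/-- The local model `ψ_{λ,L}(y; x)`. -/
def psi {m n : ℕ} (A : Matrix (Fin m) (Fin n) ℝ) (b : Fin m → ℝ) (lam L : ℝ)
    (y x : Fin n → ℝ) : ℝ :=
  fls A b y + dot (grad A b y) (x - y) + L / 2 * sqnorm (x - y) + lam * l1 x

/-- The noise-domination condition
`λ ≥ max{4, (γ+1)/((1−δ')γ−(1+δ'))} ⬝ ‖Aᵀz‖_∞`. -/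
def noiseCond {m n : ℕ} (A : Matrix (Fin m) (Fin n) ℝ) (z : Fin m → ℝ)
    (dp gam lam : ℝ) : Prop :=
  lam ≥ max 4 ((gam + 1) / ((1 - dp) * gam - (1 + dp))) * linf (Aᵀ.mulVec z)


/- ## Auxiliary lemmas -/

section Aux

lemma sqnorm_nonneg {n : ℕ} (x : Fin n → ℝ) : 0 ≤ sqnorm x :=
  Finset.sum_nonneg fun _ _ => sq_nonneg _

lemma l2_nonneg {n : ℕ} (x : Fin n → ℝ) : 0 ≤ l2 x := Real.sqrt_nonneg _

lemma abs_le_l2 {n : ℕ} (x : Fin n → ℝ) (i : Fin n) : |x i| ≤ l2 x := by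
  rw [l2, ← Real.sqrt_sq_eq_abs]
  exact Real.sqrt_le_sqrt
    (Finset.single_le_sum (f := fun j => (x j) ^ 2) (fun j _ => sq_nonneg _) (Finset.mem_univ i))

lemma cauchy {n : ℕ} (v w : Fin n → ℝ) : |dot v w| ≤ l2 v * l2 w := by
  have h := Finset.sum_mul_sq_le_sq_mul_sq Finset.univ v w
  have h2 : |dot v w| = Real.sqrt ((dot v w) ^ 2) := (Real.sqrt_sq_eq_abs _).symm
  rw [h2, l2, l2, ← Real.sqrt_mul (sqnorm_nonneg v)]
  exact Real.sqrt_le_sqrt h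

lemma sqnorm_pos {n : ℕ} (x : Fin n → ℝ) (hx : x ≠ 0) : 0 < sqnorm x := by
  obtain ⟨i, hi⟩ : ∃ i, x i ≠ 0 := by
    by_contra h; push_neg at h; exact hx (funext h)
  have h1 : (0:ℝ) < (x i) ^ 2 := by positivity
  exact lt_of_lt_of_le h1
    (Finset.single_le_sum (f := fun j => (x j) ^ 2) (fun j _ => sq_nonneg _) (Finset.mem_univ i))

lemma sqnorm_mulVec_le {m n : ℕ} (A : Matrix (Fin m) (Fin n) ℝ) (x : Fin n → ℝ) :
    sqnorm (A.mulVec x) ≤ (∑ i, sqnorm (A i)) * sqnorm x := by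
  rw [Finset.sum_mul]
  refine Finset.sum_le_sum fun i _ => ?_
  have h := Finset.sum_mul_sq_le_sq_mul_sq Finset.univ (A i) x
  simpa [Matrix.mulVec, dotProduct, sqnorm] using h

lemma rho_bddAbove {m n : ℕ} (A : Matrix (Fin m) (Fin n) ℝ) (s : ℕ) :
    BddAbove {r | ∃ x : Fin n → ℝ, x ≠ 0 ∧ l0 x ≤ s ∧ r = sqnorm (A.mulVec x) / sqnorm x} := by
  refine ⟨∑ i, sqnorm (A i), ?_⟩
  rintro r ⟨x, hx, -, rfl⟩
  rw [div_le_iff₀ (sqnorm_pos x hx)]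
  exact sqnorm_mulVec_le A x

lemma sqnorm_le_rhoPlus {m n : ℕ} (A : Matrix (Fin m) (Fin n) ℝ) (s : ℕ)
    (hplus : 0 ≤ rhoPlus A s) (x : Fin n → ℝ) (hl0 : l0 x ≤ s) :
    sqnorm (A.mulVec x) ≤ rhoPlus A s * sqnorm x := by
  by_cases hx : x = 0
  · subst hx
    simp [Matrix.mulVec_zero, sqnorm]
  · have hmem : sqnorm (A.mulVec x) / sqnorm x ∈
        {r | ∃ y : Fin n → ℝ, y ≠ 0 ∧ l0 y ≤ s ∧ r = sqnorm (A.mulVec y) / sqnorm y} :=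
      ⟨x, hx, hl0, rfl⟩
    have hle : sqnorm (A.mulVec x) / sqnorm x ≤ rhoPlus A s :=
      le_csSup (rho_bddAbove A s) hmem
    rw [div_le_iff₀ (sqnorm_pos x hx)] at hle
    linarith [hle]

lemma l0_sub_le {n : ℕ} (S : Finset (Fin n)) (st : ℕ) (x T : Fin n → ℝ)
    (hx : l0on Sᶜ x ≤ st) (hT : l0on Sᶜ T ≤ st) : l0 (T - x) ≤ S.card + 2 * st := by
  have key : supp (T - x) \ S ⊆
      (Sᶜ.filter (fun i => T i ≠ 0)) ∪ (Sᶜ.filter (fun i => x i ≠ 0)) := by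
    intro i hi
    simp only [Finset.mem_sdiff, supp, Finset.mem_filter, Finset.mem_univ, true_and,
      Finset.mem_union, Finset.mem_compl, Pi.sub_apply] at hi ⊢
    rcases hi with ⟨hne, hiS⟩
    by_contra h
    push_neg at h
    exact hne (by rw [h.1 hiS, h.2 hiS, sub_zero])
  have h1 : (supp (T - x) ∩ S).card ≤ S.card :=
    Finset.card_le_card (Finset.inter_subset_right)
  have h2 : (supp (T - x) \ S).card ≤ st + st := by
    calc (supp (T - x) \ S).card
        ≤ ((Sᶜ.filter (fun i => T i ≠ 0)) ∪ (Sᶜ.filter (fun i => x i ≠ 0))).card :=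
          Finset.card_le_card key
      _ ≤ (Sᶜ.filter (fun i => T i ≠ 0)).card + (Sᶜ.filter (fun i => x i ≠ 0)).card :=
          Finset.card_union_le _ _
      _ ≤ st + st := add_le_add hT hx
  have h3 := Finset.card_inter_add_card_sdiff (supp (T - x)) S
  unfold l0
  omega

lemma scalar_min (Mv c lam t0 : ℝ) (hM : 0 < Mv) (hlam : 0 < lam)
    (hmin : ∀ t, Mv / 2 * t0 ^ 2 + c * t0 + lam * |t0| ≤ Mv / 2 * t ^ 2 + c * t + lam * |t|) :
    (t0 ≠ 0 → Mv * t0 + c + lam * Real.sign t0 = 0) ∧ (t0 = 0 → |c| ≤ lam) := by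
  constructor
  · intro ht0
    rcases ht0.lt_or_gt with hneg | hpos
    · rw [Real.sign_of_neg hneg]
      set d := Mv * t0 + c - lam with hd_def
      by_contra hd'
      have hd : d ≠ 0 := by intro h; apply hd'; rw [hd_def] at h; linarith
      have hdpos : 0 < |d| := abs_pos.mpr hd
      set δ := min (1 / Mv) (-t0 / (2 * |d|)) with hδdef
      have hδpos : 0 < δ :=
        lt_min (by positivity) (div_pos (by linarith) (by positivity))
      have hδ1 : δ ≤ 1 / Mv := min_le_left _ _
      have hMδ : Mv * δ ≤ 1 := by
        rw [le_div_iff₀ hM] at hδ1; linarith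
      have hδ2 : δ ≤ -t0 / (2 * |d|) := min_le_right _ _
      set ε := -d * δ with hεdef
      have hεabs : |ε| ≤ -t0 / 2 := by
        have h1 : |ε| = |d| * δ := by
          rw [hεdef, abs_mul, abs_neg, abs_of_pos hδpos]
        rw [h1]
        calc |d| * δ ≤ |d| * (-t0 / (2 * |d|)) :=
              mul_le_mul_of_nonneg_left hδ2 hdpos.le
          _ = -t0 / 2 := by field_simp
      have habs := abs_le.mp hεabs
      have htneg : t0 + ε < 0 := by linarith
      have h := hmin (t0 + ε)
      rw [abs_of_neg hneg, abs_of_neg htneg] at h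
      have hkey : 0 ≤ d * ε + Mv / 2 * ε ^ 2 := by nlinarith [h]
      have heq : d * ε + Mv / 2 * ε ^ 2 = d ^ 2 * δ * (Mv * δ / 2 - 1) := by
        rw [hεdef]; ring
      rw [heq] at hkey
      have hd2 : 0 < d ^ 2 := by rw [← sq_abs]; exact pow_pos hdpos 2
      have hfin : d ^ 2 * δ * (Mv * δ / 2 - 1) < 0 :=
        mul_neg_of_pos_of_neg (mul_pos hd2 hδpos) (by linarith)
      linarith
    · rw [Real.sign_of_pos hpos]
      set d := Mv * t0 + c + lam with hd_def
      by_contra hd'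
      have hd : d ≠ 0 := by intro h; apply hd'; rw [hd_def] at h; linarith
      have hdpos : 0 < |d| := abs_pos.mpr hd
      set δ := min (1 / Mv) (t0 / (2 * |d|)) with hδdef
      have hδpos : 0 < δ :=
        lt_min (by positivity) (div_pos hpos (by positivity))
      have hδ1 : δ ≤ 1 / Mv := min_le_left _ _
      have hMδ : Mv * δ ≤ 1 := by
        rw [le_div_iff₀ hM] at hδ1; linarith
      have hδ2 : δ ≤ t0 / (2 * |d|) := min_le_right _ _
      set ε := -d * δ with hεdef
      have hεabs : |ε| ≤ t0 / 2 := by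
        have h1 : |ε| = |d| * δ := by
          rw [hεdef, abs_mul, abs_neg, abs_of_pos hδpos]
        rw [h1]
        calc |d| * δ ≤ |d| * (t0 / (2 * |d|)) :=
              mul_le_mul_of_nonneg_left hδ2 hdpos.le
          _ = t0 / 2 := by field_simp
      have habs := abs_le.mp hεabs
      have htpos : 0 < t0 + ε := by linarith
      have h := hmin (t0 + ε)
      rw [abs_of_pos hpos, abs_of_pos htpos] at h
      have hkey : 0 ≤ d * ε + Mv / 2 * ε ^ 2 := by nlinarith [h]
      have heq : d * ε + Mv / 2 * ε ^ 2 = d ^ 2 * δ * (Mv * δ / 2 - 1) := by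
        rw [hεdef]; ring
      rw [heq] at hkey
      have hd2 : 0 < d ^ 2 := by rw [← sq_abs]; exact pow_pos hdpos 2
      have hfin : d ^ 2 * δ * (Mv * δ / 2 - 1) < 0 :=
        mul_neg_of_pos_of_neg (mul_pos hd2 hδpos) (by linarith)
      linarith
  · intro h0
    subst h0
    by_contra hc
    push_neg at hc
    rcases lt_trichotomy c 0 with hcneg | hc0 | hcpos
    · have habs : |c| = -c := abs_of_neg hcneg
      rw [habs] at hc
      set t := (-c - lam) / Mv with ht
      have htpos : 0 < t := div_pos (by linarith) hM
      have hMt : Mv * t = -c - lam := by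
        rw [ht, mul_div_cancel₀ _ hM.ne']
      have h := hmin t
      rw [abs_of_pos htpos] at h
      simp only [abs_zero] at h
      have key : Mv * t * t = (-c - lam) * t := by rw [hMt]
      nlinarith [h, key, mul_pos htpos (show (0:ℝ) < -c - lam by linarith)]
    · rw [hc0] at hc; simp at hc; linarith
    · have habs : |c| = c := abs_of_pos hcpos
      rw [habs] at hc
      set t := (lam - c) / Mv with ht
      have htneg : t < 0 := div_neg_of_neg_of_pos (by linarith) hM
      have hMt : Mv * t = lam - c := by
        rw [ht, mul_div_cancel₀ _ hM.ne']
      have h := hmin t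
      rw [abs_of_neg htneg] at h
      simp only [abs_zero] at h
      have key : Mv * t * t = (lam - c) * t := by rw [hMt]
      nlinarith [h, key, mul_neg_of_neg_of_pos htneg (show (0:ℝ) < c - lam by linarith)]

end Aux
theorem stmt12 {m n : ℕ} (A : Matrix (Fin m) (Fin n) ℝ) (b : Fin m → ℝ)
    (S : Finset (Fin n)) (lam : ℝ) (hlam : 0 < lam) (st : ℕ) (hst : 1 ≤ st)
    (hrho : 0 < rhoMinus A (S.card + 2 * st))
    (M : ℝ) (hM : rhoMinus A (S.card + 2 * st) ≤ M)
    (x : Fin n → ℝ) (hxsp : l0on Sᶜ x ≤ st)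
    (T : Fin n → ℝ) (hT : ∀ u, psi A b lam M x T ≤ psi A b lam M x u)
    (hTsp : l0on Sᶜ T ≤ st) :
    omega A b lam T ≤
      (1 + rhoPlus A (S.card + 2 * st) / rhoMinus A (S.card + 2 * st)) *
        l2 (fun i => M * (x i - T i)) := by

  classical
  set s := S.card + 2 * st with hs
  have hMpos : 0 < M := lt_of_lt_of_le hrho hM
  -- the defining set for rhoMinus/rhoPlus is nonempty
  have hne : {r | ∃ y : Fin n → ℝ, y ≠ 0 ∧ l0 y ≤ s ∧
      r = sqnorm (A.mulVec y) / sqnorm y}.Nonempty := by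
    by_contra h
    rw [Set.not_nonempty_iff_eq_empty] at h
    rw [rhoMinus, h, Real.sInf_empty] at hrho
    exact lt_irrefl 0 hrho
  obtain ⟨r0, y0, hy0, hl0y0, hr0⟩ := hne
  have hnne : Nonempty (Fin n) := by
    by_contra hemp
    apply hy0
    funext i
    exact absurd ⟨i⟩ hemp
  have hplus : 0 ≤ rhoPlus A s := by
    have h1 : (0:ℝ) ≤ r0 := by
      rw [hr0]; exact div_nonneg (sqnorm_nonneg _) (sqnorm_nonneg _)
    exact le_trans h1 (le_csSup (rho_bddAbove A s) ⟨y0, hy0, hl0y0, hr0⟩)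
  -- decomposition of psi into coordinatewise terms
  set F : Fin n → ℝ → ℝ :=
    fun j t => grad A b x j * (t - x j) + M / 2 * (t - x j) ^ 2 + lam * |t| with hF
  have hpsi : ∀ u : Fin n → ℝ, psi A b lam M x u = fls A b x + ∑ j, F j (u j) := by
    intro u
    simp only [psi, dot, sqnorm, l1, hF, Pi.sub_apply, Finset.mul_sum,
      Finset.sum_add_distrib]
    ring
  -- coordinatewise minimality
  have hcoord : ∀ i t, F i (T i) ≤ F i t := by
    intro i t
    have h := hT (Function.update T i t)
    rw [hpsi, hpsi] at h
    have h2 : ∑ j, F j (Function.update T i t j) =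
        (∑ j ∈ Finset.univ.erase i, F j (T j)) + F i t := by
      rw [← Finset.sum_erase_add _ _ (Finset.mem_univ i), Function.update_self]
      congr 1
      exact Finset.sum_congr rfl fun j hj => by
        rw [Function.update_of_ne (Finset.ne_of_mem_erase hj)]
    have h3 : ∑ j, F j (T j) =
        (∑ j ∈ Finset.univ.erase i, F j (T j)) + F i (T i) :=
      (Finset.sum_erase_add _ _ (Finset.mem_univ i)).symm
    rw [h2, h3] at h
    linarith
  -- scalar optimality conditions
  have hopt : ∀ i, (T i ≠ 0 → M * T i + (grad A b x i - M * x i) +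
      lam * Real.sign (T i) = 0) ∧ (T i = 0 → |grad A b x i - M * x i| ≤ lam) := by
    intro i
    apply scalar_min M (grad A b x i - M * x i) lam (T i) hMpos hlam
    intro t
    have h := hcoord i t
    have e : ∀ w : ℝ, F i w = M / 2 * w ^ 2 + (grad A b x i - M * x i) * w + lam * |w| +
        (M / 2 * (x i) ^ 2 - grad A b x i * x i) := by
      intro w; simp only [hF]; ring
    rw [e, e] at h
    linarith
  -- the subgradient
  set ξ : Fin n → ℝ := fun i => (M * (x i - T i) - grad A b x i) / lam with hξdef
  have hξ : IsSubgrad T ξ := by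
    intro i
    constructor
    · intro hne'
      have h := (hopt i).1 hne'
      simp only [hξdef]
      rw [div_eq_iff hlam.ne']
      linarith
    · intro h0
      have h := (hopt i).2 h0
      simp only [hξdef]
      rw [abs_div, abs_of_pos hlam, div_le_one hlam, h0, sub_zero]
      rw [abs_sub_comm] at h
      exact h
  have hlx : ∀ i, lam * ξ i = M * (x i - T i) - grad A b x i := by
    intro i
    simp only [hξdef]
    rw [mul_comm, div_mul_cancel₀ _ hlam.ne']
  -- omega is at most the residue of our subgradient
  have homega : omega A b lam T ≤ linf (fun i => grad A b T i + lam * ξ i) := by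
    apply csInf_le
    · refine ⟨0, ?_⟩
      rintro r ⟨ξ', -, rfl⟩
      simp only [linf]
      exact Real.iSup_nonneg fun i => abs_nonneg _
    · exact ⟨ξ, hξ, rfl⟩
  -- sparsity of the difference
  have hl0u : l0 (T - x) ≤ s := l0_sub_le S st x T hxsp hTsp
  have hsqAu : sqnorm (A.mulVec (T - x)) ≤ rhoPlus A s * sqnorm (T - x) :=
    sqnorm_le_rhoPlus A s hplus (T - x) hl0u
  -- rewrite the residue
  have hgradTx : ∀ i, grad A b T i + lam * ξ i =
      (Aᵀ.mulVec (A.mulVec (T - x))) i + M * (x i - T i) := by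
    intro i
    rw [hlx i]
    have hv : grad A b T - grad A b x = Aᵀ.mulVec (A.mulVec (T - x)) := by
      simp only [grad, Matrix.mulVec_sub]
      abel
    have h2 := congrFun hv i
    simp only [Pi.sub_apply] at h2
    linarith
  -- column bound
  have hcol : ∀ i : Fin n, sqnorm (fun j => A j i) ≤ rhoPlus A s := by
    intro i
    have hcolA : A.mulVec (fun k => if k = i then (1:ℝ) else 0) = fun j => A j i := by
      funext j
      simp [Matrix.mulVec, dotProduct, mul_ite]
    have hsq : sqnorm (fun k => if k = i then (1:ℝ) else 0) = 1 := by
      simp [sqnorm, ite_pow]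
    have hl0e : l0 (fun k => if k = i then (1:ℝ) else 0) ≤ s := by
      have hsub : supp (fun k => if k = i then (1:ℝ) else 0) ⊆ {i} := by
        intro k hk
        simp only [supp, Finset.mem_filter, Finset.mem_univ, true_and] at hk
        simp only [Finset.mem_singleton]
        by_contra hne'
        exact hk (by simp [hne'])
      calc l0 (fun k => if k = i then (1:ℝ) else 0)
          ≤ ({i} : Finset (Fin n)).card := Finset.card_le_card hsub
        _ = 1 := Finset.card_singleton i
        _ ≤ s := by omega
    have h := sqnorm_le_rhoPlus A s hplus _ hl0e
    rw [hcolA, hsq, mul_one] at h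
    exact h
  -- bound on each coordinate of AᵀA(T-x)
  have hAtAu : ∀ i, |(Aᵀ.mulVec (A.mulVec (T - x))) i| ≤ rhoPlus A s * l2 (T - x) := by
    intro i
    have hdot : (Aᵀ.mulVec (A.mulVec (T - x))) i =
        dot (fun j => A j i) (A.mulVec (T - x)) := by
      simp [Matrix.mulVec, dotProduct, dot, Matrix.transpose_apply]
    rw [hdot]
    calc |dot (fun j => A j i) (A.mulVec (T - x))|
        ≤ l2 (fun j => A j i) * l2 (A.mulVec (T - x)) := cauchy _ _
      _ ≤ Real.sqrt (rhoPlus A s) * Real.sqrt (rhoPlus A s * sqnorm (T - x)) := by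
          apply mul_le_mul (Real.sqrt_le_sqrt (hcol i)) (Real.sqrt_le_sqrt hsqAu)
            (l2_nonneg _) (Real.sqrt_nonneg _)
      _ = rhoPlus A s * l2 (T - x) := by
          rw [Real.sqrt_mul hplus, ← mul_assoc, Real.mul_self_sqrt hplus]
          rfl
  -- l2 of the gradient mapping
  have hgl2 : l2 (fun i => M * (x i - T i)) = M * l2 (T - x) := by
    have h1 : sqnorm (fun i => M * (x i - T i)) = M ^ 2 * sqnorm (T - x) := by
      simp only [sqnorm, Finset.mul_sum, Pi.sub_apply]
      exact Finset.sum_congr rfl fun i _ => by ring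
    simp only [l2, h1]
    rw [Real.sqrt_mul (sq_nonneg M), Real.sqrt_sq hMpos.le]
  -- per-coordinate bound on the residue
  have hper : ∀ i, |grad A b T i + lam * ξ i| ≤
      (1 + rhoPlus A s / rhoMinus A s) * l2 (fun i => M * (x i - T i)) := by
    intro i
    rw [hgradTx i]
    calc |(Aᵀ.mulVec (A.mulVec (T - x))) i + M * (x i - T i)|
        ≤ |(Aᵀ.mulVec (A.mulVec (T - x))) i| + |M * (x i - T i)| := abs_add_le _ _
      _ ≤ rhoPlus A s * l2 (T - x) + l2 (fun i => M * (x i - T i)) :=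
          add_le_add (hAtAu i) (abs_le_l2 (fun i => M * (x i - T i)) i)
      _ ≤ (1 + rhoPlus A s / rhoMinus A s) * l2 (fun i => M * (x i - T i)) := by
          rw [hgl2]
          have hk : rhoPlus A s ≤ rhoPlus A s / rhoMinus A s * M := by
            rw [div_mul_eq_mul_div, le_div_iff₀ hrho]
            exact mul_le_mul_of_nonneg_left hM hplus
          have hk2 := mul_le_mul_of_nonneg_right hk (l2_nonneg (T - x))
          nlinarith [l2_nonneg (T - x)]
  refine le_trans homega ?_
  simp only [linf]
  refine Real.iSup_le (fun i => hper i) ?_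
  exact mul_nonneg (by linarith [div_nonneg hplus (le_of_lt hrho)]) (l2_nonneg _)


end PGH
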